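/- Let 0 < α < 1, 0 < β < 1, 0 < γ < 1 with γ + α − 1 > 0, τ > 0, σ_e > 0, p > 0, and c, θ be real. Let I ⊆ (0,∞) be an open interval and x : I → (0,1) a twice differentiable function satisfying, for every t ∈ I, the identity τσ_e·x(t)^{−α} − (τσ_e·t^{1−β}/(1−β))·(1−x(t))^{−α} + c − (1−θ)p = 0. Then for every t ∈ I, γ·(1−x(t))^{−1}·(x'(t))² + x''(t) > 0. -/

import Mathlib

/-- The key expression `γ (1 - x(t))⁻¹ (x'(t))² + x''(t)` is strictly positive
along the mobile user's best response to the caching effort. -/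
theorem eccsp_key_expression_pos (α β γ τ σe c p θ a b : ℝ) (x : ℝ → ℝ)
    (hα0 : 0 < α) (hα1 : α < 1) (hβ0 : 0 < β) (hβ1 : β < 1)
    (hγ0 : 0 < γ) (hγ1 : γ < 1) (hsum : 0 < γ + α - 1)
    (hτ : 0 < τ) (hσe : 0 < σe) (hp : 0 < p)
    (hI : Set.Ioo a b ⊆ Set.Ioi (0 : ℝ))
    (hmem : ∀ t ∈ Set.Ioo a b, x t ∈ Set.Ioo (0 : ℝ) 1)
    (hdiff : ∀ t ∈ Set.Ioo a b, DifferentiableAt ℝ x t)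
    (hdiff2 : ∀ t ∈ Set.Ioo a b, DifferentiableAt ℝ (deriv x) t)
    (hFOC : ∀ t ∈ Set.Ioo a b,
      τ * σe * x t ^ (-α) - τ * σe * t ^ (1 - β) / (1 - β) * (1 - x t) ^ (-α)
        + c - (1 - θ) * p = 0) :
    ∀ t ∈ Set.Ioo a b,
      0 < γ * (1 - x t)⁻¹ * (deriv x t) ^ 2 + deriv (deriv x) t := by
  have hβ' : (1:ℝ) - β ≠ 0 := by linarith
  set F : ℝ → ℝ := fun s =>
    τ * σe * x s ^ (-α) - τ * σe * s ^ (1 - β) / (1 - β) * (1 - x s) ^ (-α)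
      + c - (1 - θ) * p with hF
  set G : ℝ → ℝ := fun s =>
    τ * σe * (deriv x s * (-α) * x s ^ (-α - 1))
      - ((τ * σe * ((1 - β) * s ^ (1 - β - 1))) / (1 - β) * (1 - x s) ^ (-α)
        + τ * σe * s ^ (1 - β) / (1 - β)
          * ((0 - deriv x s) * (-α) * (1 - x s) ^ (-α - 1))) with hG
  -- Step 1: G vanishes on the interval
  have hG0 : ∀ s ∈ Set.Ioo a b, G s = 0 := by
    intro s hs
    have hs0 : 0 < s := hI hs
    have hxs := hmem s hs
    have hxu : (0:ℝ) < x s := hxs.1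
    have hxv : (0:ℝ) < 1 - x s := by linarith [hxs.2]
    have hx' : HasDerivAt x (deriv x s) s := (hdiff s hs).hasDerivAt
    have h1 : HasDerivAt (fun y => τ * σe * x y ^ (-α))
        (τ * σe * (deriv x s * (-α) * x s ^ (-α - 1))) s :=
      (hx'.rpow_const (Or.inl hxu.ne')).const_mul (τ * σe)
    have h2 : HasDerivAt (fun y : ℝ => τ * σe * y ^ (1 - β) / (1 - β))
        ((τ * σe * ((1 - β) * s ^ (1 - β - 1))) / (1 - β)) s :=
      (((Real.hasDerivAt_rpow_const (p := 1 - β) (Or.inl hs0.ne')).const_mul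
        (τ * σe)).div_const (1 - β))
    have h3 : HasDerivAt (fun y => (1 - x y) ^ (-α))
        ((0 - deriv x s) * (-α) * (1 - x s) ^ (-α - 1)) s :=
      ((hasDerivAt_const s 1).sub hx').rpow_const (Or.inl hxv.ne')
    have hFd : HasDerivAt F (G s) s := by
      have := ((h1.sub (h2.mul h3)).add_const c).sub_const ((1 - θ) * p)
      convert this using 1 <;> rfl
    have hFd0 : HasDerivAt F 0 s := by
      refine (hasDerivAt_const s 0).congr_of_eventuallyEq ?_
      filter_upwards [isOpen_Ioo.mem_nhds hs] with y hy
      exact hFOC y hy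
    exact hFd.unique hFd0
  -- Step 2: main argument at a point
  intro t ht
  have ht0 : 0 < t := hI ht
  have hxt := hmem t ht
  have hxu : (0:ℝ) < x t := hxt.1
  have hxv : (0:ℝ) < 1 - x t := by linarith [hxt.2]
  have hx' : HasDerivAt x (deriv x t) t := (hdiff t ht).hasDerivAt
  have hx'' : HasDerivAt (deriv x) (deriv (deriv x) t) t := (hdiff2 t ht).hasDerivAt
  -- derivative of G at t
  have hA1 : HasDerivAt (fun y => τ * σe * (deriv x y * (-α) * x y ^ (-α - 1)))
      (τ * σe * ((deriv (deriv x) t * (-α)) * x t ^ (-α - 1)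
        + (deriv x t * (-α)) * (deriv x t * (-α - 1) * x t ^ (-α - 1 - 1)))) t :=
    ((hx''.mul_const (-α)).mul (hx'.rpow_const (Or.inl hxu.ne'))).const_mul (τ * σe)
  have hA2f : HasDerivAt (fun y : ℝ => (τ * σe * ((1 - β) * y ^ (1 - β - 1))) / (1 - β))
      ((τ * σe * ((1 - β) * ((1 - β - 1) * t ^ (1 - β - 1 - 1)))) / (1 - β)) t :=
    (((Real.hasDerivAt_rpow_const (p := 1 - β - 1) (Or.inl ht0.ne')).const_mul
        (1 - β)).const_mul (τ * σe)).div_const (1 - β)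
  have hW0 : HasDerivAt (fun y => (1 - x y) ^ (-α))
      ((0 - deriv x t) * (-α) * (1 - x t) ^ (-α - 1)) t :=
    ((hasDerivAt_const t 1).sub hx').rpow_const (Or.inl hxv.ne')
  have hA2 : HasDerivAt
      (fun y => (τ * σe * ((1 - β) * y ^ (1 - β - 1))) / (1 - β) * (1 - x y) ^ (-α))
      ((τ * σe * ((1 - β) * ((1 - β - 1) * t ^ (1 - β - 1 - 1)))) / (1 - β)
          * (1 - x t) ^ (-α)
        + (τ * σe * ((1 - β) * t ^ (1 - β - 1))) / (1 - β)
          * ((0 - deriv x t) * (-α) * (1 - x t) ^ (-α - 1))) t :=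
    hA2f.mul hW0
  have hKf : HasDerivAt (fun y : ℝ => τ * σe * y ^ (1 - β) / (1 - β))
      ((τ * σe * ((1 - β) * t ^ (1 - β - 1))) / (1 - β)) t :=
    (((Real.hasDerivAt_rpow_const (p := 1 - β) (Or.inl ht0.ne')).const_mul
      (τ * σe)).div_const (1 - β))
  have hg : HasDerivAt (fun y => (0 - deriv x y) * (-α) * (1 - x y) ^ (-α - 1))
      (((0 - deriv (deriv x) t) * (-α)) * (1 - x t) ^ (-α - 1)
        + ((0 - deriv x t) * (-α))
          * ((0 - deriv x t) * (-α - 1) * (1 - x t) ^ (-α - 1 - 1))) t :=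
    (((hasDerivAt_const t 0).sub hx'').mul_const (-α)).mul
      (((hasDerivAt_const t 1).sub hx').rpow_const (Or.inl hxv.ne'))
  have hA3 : HasDerivAt
      (fun y => τ * σe * y ^ (1 - β) / (1 - β)
        * ((0 - deriv x y) * (-α) * (1 - x y) ^ (-α - 1)))
      ((τ * σe * ((1 - β) * t ^ (1 - β - 1))) / (1 - β)
          * ((0 - deriv x t) * (-α) * (1 - x t) ^ (-α - 1))
        + τ * σe * t ^ (1 - β) / (1 - β)
          * (((0 - deriv (deriv x) t) * (-α)) * (1 - x t) ^ (-α - 1)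
            + ((0 - deriv x t) * (-α))
              * ((0 - deriv x t) * (-α - 1) * (1 - x t) ^ (-α - 1 - 1)))) t :=
    hKf.mul hg
  have hGd : HasDerivAt G
      (τ * σe * ((deriv (deriv x) t * (-α)) * x t ^ (-α - 1)
        + (deriv x t * (-α)) * (deriv x t * (-α - 1) * x t ^ (-α - 1 - 1)))
       - (((τ * σe * ((1 - β) * ((1 - β - 1) * t ^ (1 - β - 1 - 1)))) / (1 - β)
          * (1 - x t) ^ (-α)
        + (τ * σe * ((1 - β) * t ^ (1 - β - 1))) / (1 - β)
          * ((0 - deriv x t) * (-α) * (1 - x t) ^ (-α - 1)))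
        + ((τ * σe * ((1 - β) * t ^ (1 - β - 1))) / (1 - β)
          * ((0 - deriv x t) * (-α) * (1 - x t) ^ (-α - 1))
        + τ * σe * t ^ (1 - β) / (1 - β)
          * (((0 - deriv (deriv x) t) * (-α)) * (1 - x t) ^ (-α - 1)
            + ((0 - deriv x t) * (-α))
              * ((0 - deriv x t) * (-α - 1) * (1 - x t) ^ (-α - 1 - 1)))))) t :=
    hA1.sub (hA2.add hA3)
  have hGd0 : HasDerivAt G 0 t := by
    refine (hasDerivAt_const t 0).congr_of_eventuallyEq ?_
    filter_upwards [isOpen_Ioo.mem_nhds ht] with y hy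
    exact hG0 y hy
  have E2 := hGd.unique hGd0
  have E1 := hG0 t ht
  simp only [hG] at E1
  have hU1 : x t ^ (-α) = x t ^ (-α - 1) * x t := by
    rw [← Real.rpow_add_one hxu.ne' (-α - 1)]; congr 1; ring
  have hU2 : x t ^ (-α - 1) = x t ^ (-α - 1 - 1) * x t := by
    rw [← Real.rpow_add_one hxu.ne' (-α - 1 - 1)]; congr 1; ring
  have hV1 : (1 - x t) ^ (-α) = (1 - x t) ^ (-α - 1) * (1 - x t) := by
    rw [← Real.rpow_add_one hxv.ne' (-α - 1)]; congr 1; ring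
  have hV2 : (1 - x t) ^ (-α - 1) = (1 - x t) ^ (-α - 1 - 1) * (1 - x t) := by
    rw [← Real.rpow_add_one hxv.ne' (-α - 1 - 1)]; congr 1; ring
  have hT1 : t ^ (1 - β) = t ^ (1 - β - 1) * t := by
    rw [← Real.rpow_add_one ht0.ne' (1 - β - 1)]; congr 1; ring
  have hT2 : t ^ (1 - β - 1) = t ^ (1 - β - 1 - 1) * t := by
    rw [← Real.rpow_add_one ht0.ne' (1 - β - 1 - 1)]; congr 1; ring
  simp only [hU1, hU2, hV1, hV2, hT1, hT2] at E1 E2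
  field_simp at E1 E2
  set u := x t with hu
  set x1 := deriv x t with hx1
  set x2 := deriv (deriv x) t with hx2
  set U := x t ^ (-α - 1 - 1) with hUdef
  set W := (1 - x t) ^ (-α - 1 - 1) with hWdef
  set T := t ^ (-β - 1) with hTdef
  have hm : (0:ℝ) < 1 - β := by linarith
  have hA : (0:ℝ) < τ * σe := mul_pos hτ hσe
  have hU0 : (0:ℝ) < U := Real.rpow_pos_of_pos hxu _
  have hW0' : (0:ℝ) < W := Real.rpow_pos_of_pos hxv _
  have hT0 : (0:ℝ) < T := Real.rpow_pos_of_pos ht0 _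
  have key : (α * (τ * σe) * ((1 - β) * U * u + T * t ^ 2 * W * (1 - u))
        * (γ * x1 ^ 2 + (1 - u) * x2)) * (1 - β) ^ 2
      = (α * (τ * σe) * x1 ^ 2 * ((1 - β) * (γ + 2 * α) * U * u
          + (1 - β) * (α + 1) * U * (1 - u) + (γ + α - 1) * T * t ^ 2 * W * (1 - u))
        + (1 - β) * β * (τ * σe) * T * W * (1 - u) ^ 3) * (1 - β) ^ 2 := by
    rw [show (1 - β - 1 - 1 : ℝ) = -β - 1 by ring, ← hTdef] at E1 E2
    linear_combination (-(1 - u) * (1 - β) ^ 2) * E2 + (2 * α * x1 * (1 - β) ^ 2) * E1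
  have hC : (0:ℝ) < (α * (τ * σe) * ((1 - β) * U * u + T * t ^ 2 * W * (1 - u)))
      * (1 - β) ^ 2 :=
    mul_pos (mul_pos (mul_pos hα0 hA)
      (add_pos (mul_pos (mul_pos hm hU0) hxu)
        (mul_pos (mul_pos (mul_pos hT0 (pow_pos ht0 2)) hW0') hxv))) (pow_pos hm 2)
  have hR : (0:ℝ) < (α * (τ * σe) * x1 ^ 2 * ((1 - β) * (γ + 2 * α) * U * u
          + (1 - β) * (α + 1) * U * (1 - u) + (γ + α - 1) * T * t ^ 2 * W * (1 - u))
        + (1 - β) * β * (τ * σe) * T * W * (1 - u) ^ 3) * (1 - β) ^ 2 := by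
    have hbr : (0:ℝ) < (1 - β) * (γ + 2 * α) * U * u
        + (1 - β) * (α + 1) * U * (1 - u) + (γ + α - 1) * T * t ^ 2 * W * (1 - u) := by
      have h1 : (0:ℝ) < (1 - β) * (γ + 2 * α) * U * u :=
        mul_pos (mul_pos (mul_pos hm (by linarith)) hU0) hxu
      have h2 : (0:ℝ) < (1 - β) * (α + 1) * U * (1 - u) :=
        mul_pos (mul_pos (mul_pos hm (by linarith)) hU0) hxv
      have h3 : (0:ℝ) < (γ + α - 1) * T * t ^ 2 * W * (1 - u) :=
        mul_pos (mul_pos (mul_pos (mul_pos hsum hT0) (pow_pos ht0 2)) hW0') hxv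
      linarith
    have h4 : (0:ℝ) ≤ α * (τ * σe) * x1 ^ 2 * ((1 - β) * (γ + 2 * α) * U * u
        + (1 - β) * (α + 1) * U * (1 - u) + (γ + α - 1) * T * t ^ 2 * W * (1 - u)) :=
      mul_nonneg (mul_nonneg (mul_nonneg hα0.le hA.le) (sq_nonneg x1)) hbr.le
    have h5 : (0:ℝ) < (1 - β) * β * (τ * σe) * T * W * (1 - u) ^ 3 :=
      mul_pos (mul_pos (mul_pos (mul_pos (mul_pos hm hβ0) hA) hT0) hW0')
        (pow_pos hxv 3)
    exact mul_pos (by linarith) (pow_pos hm 2)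
  have hfinal : (0:ℝ) < γ * x1 ^ 2 + (1 - u) * x2 := by
    have hprod : (0:ℝ) < ((α * (τ * σe) * ((1 - β) * U * u + T * t ^ 2 * W * (1 - u)))
        * (1 - β) ^ 2) * (γ * x1 ^ 2 + (1 - u) * x2) := by
      rw [show ((α * (τ * σe) * ((1 - β) * U * u + T * t ^ 2 * W * (1 - u)))
        * (1 - β) ^ 2) * (γ * x1 ^ 2 + (1 - u) * x2)
        = (α * (τ * σe) * ((1 - β) * U * u + T * t ^ 2 * W * (1 - u))
        * (γ * x1 ^ 2 + (1 - u) * x2)) * (1 - β) ^ 2 by ring, key]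
      exact hR
    rcases mul_pos_iff.mp hprod with ⟨_, h⟩ | ⟨h, _⟩
    · exact h
    · exact absurd hC (not_lt.mpr h.le)
  have heq : γ * (1 - u)⁻¹ * x1 ^ 2 + x2
      = (γ * x1 ^ 2 + (1 - u) * x2) * (1 - u)⁻¹ := by
    field_simp
  rw [heq]
  exact mul_pos hfinal (inv_pos.mpr hxv)
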